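/- Let m ≥ 2 and n ≥ 0 be integers and 1 ≤ i ≤ m. Let a_{h,j}^{(i)} (0 ≤ h ≤ n+1, 1 ≤ j ≤ m) be the partial fraction coefficients of 1/Q_{m,i,n+1}(x), and d_{n+1} = lcm(1, 2, …, n+1). Then for all 0 ≤ h ≤ n+1 and 1 ≤ j ≤ m, the rational number d_{n+1}^m · ((n+1)!)^m · a_{h,j}^{(i)} is an integer. Consequently, for any number field K and any α ∈ K, the element d_{n+1}^m · ((n+1)!)^m · (m−1)! · den(α)^{n+1} · A_{i,j,n+1}(α) lies in the ring of integers O_K, for all 1 ≤ i ≤ m and 0 ≤ j ≤ m−1. -/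

import Mathlib

/-- `a i h j` (for `1 ≤ i ≤ m`, `0 ≤ h ≤ n+1`, `1 ≤ j ≤ m`) are the partial fraction
coefficients of `1/Q_{m,i,n+1}(x)` where `Q_{m,i,n+1}(x) = (∏_{h=0}^n (x−h)^m)·(x−(n+1))^i`. -/
def IsPFD (m n : ℕ) (a : ℕ → ℕ → ℕ → ℚ) : Prop :=
  ∀ i : ℕ, 1 ≤ i → i ≤ m → ∀ x : ℚ, (∀ h : ℕ, h ≤ n + 1 → x ≠ (h : ℚ)) →
    ((∏ h ∈ Finset.range (n + 1), (x - (h : ℚ)) ^ m) * (x - ((n + 1 : ℕ) : ℚ)) ^ i)⁻¹ =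
      ∑ h ∈ Finset.range (n + 2), ∑ j ∈ Finset.range m,
        a i h (j + 1) / (x - (h : ℚ)) ^ (j + 1)

/-- The polynomial `A_{i,j,n+1}(z) = (Σ_{h=0}^{n+1} a_{h,j+1}^{(i)} (1+z)^h)/j!`. -/
noncomputable def padeA (n : ℕ) (a : ℕ → ℕ → ℕ → ℚ) (i j : ℕ) : Polynomial ℚ :=
  Polynomial.C ((j.factorial : ℚ))⁻¹ *
    ∑ h ∈ Finset.range (n + 2), Polynomial.C (a i h (j + 1)) * (1 + Polynomial.X) ^ h

/-- `dlcm n = lcm(1, 2, …, n)`. -/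
noncomputable def dlcm (n : ℕ) : ℕ := Finset.lcm (Finset.Icc 1 n) id

/-- `den α` is the least positive integer `k` such that `k·α` is an algebraic integer. -/
noncomputable def den {K : Type*} [Field K] (α : K) : ℕ :=
  sInf {k : ℕ | 0 < k ∧ IsIntegral ℤ ((k : K) * α)}

/-! ### Auxiliary material -/

namespace PadeAux

open Polynomial Finset

noncomputable section

/-- Explicit inverse of `X + C c` in power series. -/
def sinv (c : ℚ) : PowerSeries ℚ := PowerSeries.mk fun t => (-1)^t * c⁻¹^(t+1)

lemma sinv_mul {c : ℚ} (hc : c ≠ 0) :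
    (PowerSeries.X + PowerSeries.C c) * sinv c = 1 := by
  ext t
  rcases t with _ | t
  · simp [PowerSeries.coeff_zero_eq_constantCoeff, sinv, PowerSeries.constantCoeff_X, hc]
  · rw [add_mul, map_add, PowerSeries.coeff_succ_X_mul, PowerSeries.coeff_C_mul]
    simp only [sinv, PowerSeries.coeff_mk, PowerSeries.coeff_one, Nat.succ_ne_zero, if_false]
    rw [pow_succ (-1 : ℚ) t, pow_succ c⁻¹ (t+1)]
    field_simp
    ring

/-- Integrality invariant for power series coefficients. -/
def Good (n : ℕ) (c : ℚ) (f : PowerSeries ℚ) : Prop :=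
  ∀ t : ℕ, ∃ z : ℤ, c * (dlcm (n+1) : ℚ)^t * PowerSeries.coeff t f = z

lemma Good.mul {n : ℕ} {c₁ c₂ : ℚ} {f g : PowerSeries ℚ}
    (hf : Good n c₁ f) (hg : Good n c₂ g) : Good n (c₁*c₂) (f*g) := by
  intro t
  refine ⟨∑ p ∈ Finset.HasAntidiagonal.antidiagonal t, (hf p.1).choose * (hg p.2).choose, ?_⟩
  rw [PowerSeries.coeff_mul, Finset.mul_sum, Int.cast_sum]
  refine Finset.sum_congr rfl fun p hp => ?_
  have hpt : p.1 + p.2 = t := Finset.HasAntidiagonal.mem_antidiagonal.mp hp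
  have h1 := (hf p.1).choose_spec
  have h2 := (hg p.2).choose_spec
  push_cast
  rw [← h1, ← h2, ← hpt, pow_add]
  ring

lemma Good.pow {n : ℕ} {c : ℚ} {f : PowerSeries ℚ} (hf : Good n c f) (p : ℕ) :
    Good n (c^p) (f^p) := by
  induction p with
  | zero =>
    intro t
    rcases t with _ | t
    · exact ⟨1, by simp⟩
    · exact ⟨0, by simp [PowerSeries.coeff_one]⟩
  | succ p ih =>
    rw [pow_succ, pow_succ]
    exact ih.mul hf

lemma Good.prod {n : ℕ} {ι : Type*} {s : Finset ι} {c : ι → ℚ} {f : ι → PowerSeries ℚ}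
    (h : ∀ k ∈ s, Good n (c k) (f k)) :
    Good n (∏ k ∈ s, c k) (∏ k ∈ s, f k) := by
  induction s using Finset.cons_induction with
  | empty =>
    intro t
    rcases t with _ | t
    · exact ⟨1, by simp⟩
    · exact ⟨0, by simp [PowerSeries.coeff_one]⟩
  | cons k s hk ih =>
    rw [Finset.prod_cons, Finset.prod_cons]
    exact (h k (Finset.mem_cons_self k s)).mul
      (ih fun x hx => h x (Finset.mem_cons_of_mem hx))

lemma Good.congr {n : ℕ} {c c' : ℚ} {f : PowerSeries ℚ} (hf : Good n c f) (hc : c = c') :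
    Good n c' f := hc ▸ hf

lemma good_X_add_C {n : ℕ} (z : ℤ) : Good n 1 (PowerSeries.X + PowerSeries.C (z:ℚ)) := by
  intro t
  rcases t with _ | _ | t
  · exact ⟨z, by rw [map_add, PowerSeries.coeff_C]; simp⟩
  · exact ⟨dlcm (n+1), by rw [map_add, PowerSeries.coeff_C, PowerSeries.coeff_X]; norm_num⟩
  · exact ⟨0, by rw [map_add, PowerSeries.coeff_C, PowerSeries.coeff_X]; norm_num⟩

lemma good_sinv {n : ℕ} {c : ℤ} (hc : c ≠ 0) (hc2 : c.natAbs ≤ n + 1) :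
    Good n (c:ℚ) (sinv (c:ℚ)) := by
  have hdvd : c ∣ (dlcm (n+1) : ℤ) := by
    rw [← Int.natAbs_dvd, Int.natCast_dvd_natCast]
    exact Finset.dvd_lcm (Finset.mem_Icc.mpr ⟨Nat.one_le_iff_ne_zero.mpr
      (Int.natAbs_ne_zero.mpr hc), hc2⟩)
  intro t
  obtain ⟨e, he⟩ := hdvd
  refine ⟨(-1)^t * e^t, ?_⟩
  simp only [sinv, PowerSeries.coeff_mk]
  have hcq : (c:ℚ) ≠ 0 := Int.cast_ne_zero.mpr hc
  have heq : (dlcm (n+1) : ℚ) = (c:ℚ) * (e:ℚ) := by exact_mod_cast he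
  rw [heq]
  push_cast
  rw [mul_pow]
  rw [inv_pow, pow_succ]
  field_simp

/-- Step A: the partial fraction decomposition as a polynomial identity. -/
lemma polyid (m n : ℕ) (a : ℕ → ℕ → ℕ → ℚ) (ha : IsPFD m n a)
    (i : ℕ) (hi1 : 1 ≤ i) (him : i ≤ m) :
    (X - C ((n+1 : ℕ):ℚ))^(m-i) =
      ∑ h ∈ Finset.range (n+2), ∑ j ∈ Finset.range m, C (a i h (j+1)) *
        ((∏ k ∈ (Finset.range (n+2)).erase h, (X - C ((k : ℕ):ℚ))^m) *
          (X - C ((h : ℕ):ℚ))^(m-(j+1))) := by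
  apply eq_of_infinite_eval_eq
  apply Set.Infinite.mono (s := Set.range fun t : ℕ => -((t:ℚ)+1))
  swap
  · exact Set.infinite_range_of_injective (fun s t hst => by
      field_simp at hst; exact Int.negSucc.inj (by exact_mod_cast hst))
  rintro x ⟨t, rfl⟩
  set x : ℚ := -((t:ℚ)+1) with hxdef
  have hxneg : x < 0 := by
    have : (0:ℚ) ≤ (t:ℚ) := Nat.cast_nonneg t
    rw [hxdef]; linarith
  have hx : ∀ h : ℕ, h ≤ n + 1 → x ≠ (h : ℚ) := fun h _ hxh => by
    have : (0:ℚ) ≤ h := Nat.cast_nonneg h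
    linarith [hxh ▸ this]
  have hp : ∀ k : ℕ, x - (k:ℚ) ≠ 0 := fun k => by
    have : (0:ℚ) ≤ k := Nat.cast_nonneg k
    intro h0
    nlinarith [sub_eq_zero.mp h0]
  have key := ha i hi1 him x hx
  simp only [Set.mem_setOf_eq, eval_pow, eval_sub, eval_X, eval_C, eval_finset_sum,
    eval_mul, eval_prod]
  set P : ℚ := ∏ k ∈ Finset.range (n+2), (x - (k:ℚ))^m with hP
  have hQ : (∏ h ∈ Finset.range (n + 1), (x - (h : ℚ)) ^ m) * (x - ((n + 1 : ℕ) : ℚ)) ^ i ≠ 0 := by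
    apply mul_ne_zero
    · exact Finset.prod_ne_zero_iff.mpr fun k _ => pow_ne_zero _ (hp k)
    · exact pow_ne_zero _ (hp (n+1))
  have hPQ : P = ((∏ h ∈ Finset.range (n + 1), (x - (h : ℚ)) ^ m) * (x - ((n + 1 : ℕ) : ℚ)) ^ i)
      * (x - ((n+1:ℕ):ℚ))^(m-i) := by
    rw [hP, Finset.prod_range_succ]
    rw [mul_assoc, ← pow_add]
    congr 2
    omega
  have hmain : P * ((∏ h ∈ Finset.range (n + 1), (x - (h : ℚ)) ^ m)
      * (x - ((n + 1 : ℕ) : ℚ)) ^ i)⁻¹ = (x - ((n+1:ℕ):ℚ))^(m-i) := by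
    rw [hPQ, mul_comm _ ((x - ((n+1:ℕ):ℚ))^(m-i)), mul_assoc, mul_inv_cancel₀ hQ, mul_one]
  have expand : P * ∑ h ∈ Finset.range (n + 2), ∑ j ∈ Finset.range m,
        a i h (j + 1) / (x - (h : ℚ)) ^ (j + 1)
      = ∑ h ∈ Finset.range (n+2), ∑ j ∈ Finset.range m, a i h (j+1) *
        ((∏ k ∈ (Finset.range (n+2)).erase h, (x - (k : ℚ))^m) * (x - (h : ℚ))^(m-(j+1))) := by
    rw [Finset.mul_sum]
    refine Finset.sum_congr rfl fun h hh => ?_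
    rw [Finset.mul_sum]
    refine Finset.sum_congr rfl fun j hj => ?_
    have hPh : P = (x - (h:ℚ))^m * ∏ k ∈ (Finset.range (n+2)).erase h, (x - (k : ℚ))^m :=
      (Finset.mul_prod_erase _ _ hh).symm
    rw [hPh]
    rw [div_eq_mul_inv]
    have hpow : (x - (h:ℚ))^m = (x - (h:ℚ))^(j+1) * (x - (h:ℚ))^(m-(j+1)) := by
      rw [← pow_add]
      congr 1
      have := Finset.mem_range.mp hj
      omega
    rw [hpow]
    field_simp [hp h]
  calc (x - ((n+1:ℕ):ℚ))^(m-i) = P * ((∏ h ∈ Finset.range (n + 1), (x - (h : ℚ)) ^ m)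
      * (x - ((n + 1 : ℕ) : ℚ)) ^ i)⁻¹ := hmain.symm
    _ = _ := by rw [key, expand]

/-- The shift-to-`h`-then-coerce ring hom. -/
def shiftHom (h : ℚ) : Polynomial ℚ →+* PowerSeries ℚ :=
  (Polynomial.coeToPowerSeries.ringHom).comp
    ((Polynomial.aeval (Polynomial.X + Polynomial.C h)).toRingHom)

lemma shiftHom_X_sub_C (h c : ℚ) :
    shiftHom h (X - C c) = PowerSeries.X + PowerSeries.C (h - c) := by
  simp only [shiftHom, RingHom.comp_apply, AlgHom.toRingHom_eq_coe, RingHom.coe_coe,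
    map_sub, aeval_X, aeval_C, Polynomial.coeToPowerSeries.ringHom_apply]
  simp only [Polynomial.algebraMap_eq, Polynomial.coe_add, Polynomial.coe_X, Polynomial.coe_C]
  ring

/-- Step B: coefficient extraction. -/
lemma coeff_formula (m n : ℕ) (a : ℕ → ℕ → ℕ → ℚ) (i : ℕ)
    (hpoly : (X - C ((n+1 : ℕ):ℚ))^(m-i) =
      ∑ h ∈ Finset.range (n+2), ∑ j ∈ Finset.range m, C (a i h (j+1)) *
        ((∏ k ∈ (Finset.range (n+2)).erase h, (X - C ((k : ℕ):ℚ))^m) *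
          (X - C ((h : ℕ):ℚ))^(m-(j+1))))
    (h : ℕ) (hh : h < n + 2) (j : ℕ) (hj : j < m) :
    a i h (j+1) = PowerSeries.coeff (m-(j+1))
      ((PowerSeries.X + PowerSeries.C ((h:ℚ) - ((n+1:ℕ):ℚ)))^(m-i) *
        ∏ k ∈ (Finset.range (n+2)).erase h, (sinv ((h:ℚ) - (k:ℚ)))^m) := by
  classical
  set w : ℕ → PowerSeries ℚ := fun k => PowerSeries.X + PowerSeries.C ((h:ℚ) - (k:ℚ)) with hw
  have hcast : ∀ k : ℕ, k ≠ h → ((h:ℚ) - (k:ℚ)) ≠ 0 := by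
    intro k hk h0
    have h1 : (h:ℚ) = (k:ℚ) := sub_eq_zero.mp h0
    exact hk (by exact_mod_cast h1.symm)
  have himg := congrArg (shiftHom (h:ℚ)) hpoly
  rw [map_pow, shiftHom_X_sub_C] at himg
  simp only [map_sum, map_mul, map_prod, map_pow, shiftHom_X_sub_C] at himg
  have hC : ∀ c : ℚ, shiftHom (h:ℚ) (C c) = PowerSeries.C c := by
    intro c
    simp only [shiftHom, RingHom.comp_apply, AlgHom.toRingHom_eq_coe, RingHom.coe_coe,
      aeval_C, Polynomial.coeToPowerSeries.ringHom_apply, Polynomial.algebraMap_eq,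
      Polynomial.coe_C]
  simp only [hC] at himg
  set u : PowerSeries ℚ := ∏ k ∈ (Finset.range (n+2)).erase h, (w k)^m with hu
  set V : PowerSeries ℚ := ∏ k ∈ (Finset.range (n+2)).erase h, (sinv ((h:ℚ) - (k:ℚ)))^m with hV
  have huV : u * V = 1 := by
    rw [hu, hV, ← Finset.prod_mul_distrib]
    apply Finset.prod_eq_one
    intro k hk
    rw [← mul_pow, sinv_mul (hcast k (Finset.ne_of_mem_erase hk)), one_pow]
  set S : PowerSeries ℚ := ∑ j ∈ Finset.range m,
      PowerSeries.C (a i h (j+1)) * PowerSeries.X^(m-(j+1)) with hS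
  have hwh : w h = PowerSeries.X := by rw [hw]; simp
  have hterm : (∑ j ∈ Finset.range m, PowerSeries.C (a i h (j+1)) *
      ((∏ k ∈ (Finset.range (n+2)).erase h, (w k)^m) * (w h)^(m-(j+1)))) = u * S := by
    rw [hS, Finset.mul_sum]
    refine Finset.sum_congr rfl fun j' _ => ?_
    rw [hwh, ← hu]
    ring
  have hsplit : (PowerSeries.X + PowerSeries.C ((h:ℚ) - ((n+1:ℕ):ℚ)))^(m-i) - u * S
      = ∑ h' ∈ (Finset.range (n+2)).erase h, ∑ j ∈ Finset.range m,
          PowerSeries.C (a i h' (j+1)) *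
          ((∏ k ∈ (Finset.range (n+2)).erase h', (w k)^m) * (w h')^(m-(j+1))) := by
    rw [himg, ← hterm, ← Finset.add_sum_erase _ _ (Finset.mem_range.mpr hh)]
    ring
  have hdvd : (PowerSeries.X : PowerSeries ℚ)^m ∣
      ((PowerSeries.X + PowerSeries.C ((h:ℚ) - ((n+1:ℕ):ℚ)))^(m-i) - u * S) := by
    rw [hsplit]
    apply Finset.dvd_sum
    intro h' hh'
    apply Finset.dvd_sum
    intro j' _
    have hmem : h ∈ (Finset.range (n+2)).erase h' := by
      apply Finset.mem_erase.mpr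
      exact ⟨(Finset.ne_of_mem_erase hh').symm, Finset.mem_range.mpr hh⟩
    have : (w h)^m ∣ ∏ k ∈ (Finset.range (n+2)).erase h', (w k)^m :=
      Finset.dvd_prod_of_mem _ hmem
    rw [hwh] at this
    exact Dvd.dvd.mul_left (this.mul_right _) _
  have hdvd2 : (PowerSeries.X : PowerSeries ℚ)^m ∣
      ((PowerSeries.X + PowerSeries.C ((h:ℚ) - ((n+1:ℕ):ℚ)))^(m-i) * V - S) := by
    have : ((PowerSeries.X + PowerSeries.C ((h:ℚ) - ((n+1:ℕ):ℚ)))^(m-i) - u * S) * V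
        = (PowerSeries.X + PowerSeries.C ((h:ℚ) - ((n+1:ℕ):ℚ)))^(m-i) * V - S := by
      rw [sub_mul, mul_assoc, mul_comm S V, ← mul_assoc, huV, one_mul]
    rw [← this]
    exact hdvd.mul_right V
  have hco := (PowerSeries.X_pow_dvd_iff.mp hdvd2) (m-(j+1)) (by omega)
  rw [map_sub, sub_eq_zero] at hco
  symm
  rw [hco, hS]
  rw [map_sum]
  rw [Finset.sum_eq_single j]
  · rw [PowerSeries.coeff_C_mul, PowerSeries.coeff_X_pow, if_pos rfl, mul_one]
  · intro j' hj' hne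
    rw [PowerSeries.coeff_C_mul, PowerSeries.coeff_X_pow, if_neg, mul_zero]
    have := Finset.mem_range.mp hj'
    omega
  · intro habs
    exact absurd (Finset.mem_range.mpr hj) habs

/-- The product of differences divides `(n+1)!`. -/
lemma prod_diff_dvd (n h : ℕ) (hh : h < n + 2) :
    (∏ k ∈ (Finset.range (n+2)).erase h, ((h:ℤ) - (k:ℤ))) ∣ ((n+1).factorial : ℤ) := by
  have hsplit : (Finset.range (n+2)).erase h = Finset.range h ∪ Finset.Ico (h+1) (n+2) := by
    ext k
    simp only [Finset.mem_erase, Finset.mem_range, Finset.mem_union, Finset.mem_Ico]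
    omega
  have hdisj : Disjoint (Finset.range h) (Finset.Ico (h+1) (n+2)) := by
    rw [Finset.disjoint_left]
    intro k hk hk2
    simp only [Finset.mem_range] at hk
    simp only [Finset.mem_Ico] at hk2
    omega
  rw [hsplit, Finset.prod_union hdisj]
  have h1 : (∏ k ∈ Finset.range h, ((h:ℤ) - (k:ℤ))) = (h.factorial : ℤ) := by
    rw [← Finset.prod_range_reflect]
    rw [← Nat.cast_inj (R := ℤ) |>.mpr (Finset.prod_range_add_one_eq_factorial h)]
    push_cast
    refine Finset.prod_congr rfl fun k hk => ?_
    have := Finset.mem_range.mp hk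
    omega
  have h2 : (∏ k ∈ Finset.Ico (h+1) (n+2), ((h:ℤ) - (k:ℤ)))
      = (-1)^(n+1-h) * ((n+1-h).factorial : ℤ) := by
    rw [Finset.prod_Ico_eq_prod_range]
    have hn : n + 2 - (h+1) = n + 1 - h := by omega
    rw [hn]
    have : ∀ k ∈ Finset.range (n+1-h), (h:ℤ) - ((h+1+k : ℕ):ℤ) = -((k:ℤ)+1) := by
      intro k _
      push_cast
      ring
    rw [Finset.prod_congr rfl this]
    have hrw : ∀ k ∈ Finset.range (n+1-h), -((k:ℤ)+1) = (-1) * ((k:ℤ)+1) :=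
      fun k _ => by ring
    rw [Finset.prod_congr rfl hrw, Finset.prod_mul_distrib, Finset.prod_const,
      Finset.card_range]
    congr 1
    have hfac := Finset.prod_range_add_one_eq_factorial (n+1-h)
    calc (∏ k ∈ Finset.range (n+1-h), ((k:ℤ)+1))
        = ((∏ k ∈ Finset.range (n+1-h), (k+1) : ℕ) : ℤ) := by push_cast; rfl
      _ = _ := by rw [hfac]
  rw [h1, h2]
  have hdvd : h.factorial * (n+1-h).factorial ∣ (n+1).factorial :=
    Nat.factorial_mul_factorial_dvd_factorial (by omega : h ≤ n + 1)
  have hdvd2 : ((h.factorial * (n+1-h).factorial : ℕ) : ℤ) ∣ ((n+1).factorial : ℤ) :=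
    Int.natCast_dvd_natCast.mpr hdvd
  push_cast at hdvd2
  rcases hdvd2 with ⟨e, he⟩
  refine ⟨(-1)^(n+1-h) * e, ?_⟩
  have hone : ((-1:ℤ))^(n+1-h) * ((-1:ℤ))^(n+1-h) = 1 := by
    rw [← pow_add, ← two_mul, pow_mul]
    norm_num
  calc ((n+1).factorial : ℤ)
      = (h.factorial : ℤ) * ((n+1-h).factorial : ℤ) * e := he
    _ = (h.factorial : ℤ) * ((-1)^(n+1-h) * ((n+1-h).factorial : ℤ)) * ((-1)^(n+1-h) * e) := by
        rw [show (h.factorial : ℤ) * ((-1)^(n+1-h) * ((n+1-h).factorial : ℤ)) * ((-1)^(n+1-h) * e)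
          = (h.factorial : ℤ) * ((n+1-h).factorial : ℤ) * e * (((-1:ℤ))^(n+1-h) * ((-1:ℤ))^(n+1-h)) by ring, hone, mul_one]

end

end PadeAux

open PadeAux Polynomial Finset

/-- `d_{n+1}^m ((n+1)!)^m a_{h,j}^{(i)} ∈ ℤ`, and consequently for a number
field `K` and `α ∈ K`, `d_{n+1}^m ((n+1)!)^m (m−1)! den(α)^{n+1} A_{i,j,n+1}(α) ∈ O_K`. -/
theorem pade_denominator (m n : ℕ) (hm : 2 ≤ m) (a : ℕ → ℕ → ℕ → ℚ)
    (ha : IsPFD m n a) :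
    (∀ i h j : ℕ, 1 ≤ i → i ≤ m → h ≤ n + 1 → 1 ≤ j → j ≤ m →
      ∃ z : ℤ, ((dlcm (n + 1) : ℚ)) ^ m * (((n + 1).factorial : ℚ)) ^ m * a i h j = (z : ℚ)) ∧
    (∀ (K : Type) [Field K] [NumberField K] (α : K) (i j : ℕ), 1 ≤ i → i ≤ m → j ≤ m - 1 →
      IsIntegral ℤ
        ((((dlcm (n + 1)) ^ m * ((n + 1).factorial) ^ m * (m - 1).factorial *
            (den α) ^ (n + 1) : ℕ) : K) * Polynomial.aeval α (padeA n a i j))) := by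
  classical
  have part1 : ∀ i h j : ℕ, 1 ≤ i → i ≤ m → h ≤ n + 1 → 1 ≤ j → j ≤ m →
      ∃ z : ℤ, ((dlcm (n + 1) : ℚ)) ^ m * (((n + 1).factorial : ℚ)) ^ m * a i h j = (z : ℚ) := by
    intro i h j hi1 him hh hj1 hjm
    obtain ⟨j', rfl⟩ : ∃ j', j = j' + 1 := ⟨j-1, by omega⟩
    have hpoly := polyid m n a ha i hi1 him
    have hcf := coeff_formula m n a i hpoly h (by omega) j' (by omega)
    -- the Good invariant for the relevant series
    have hgood : Good n ((1:ℚ)^(m-i) * ∏ k ∈ (Finset.range (n+2)).erase h,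
          ((((h:ℤ) - (k:ℤ)):ℚ))^m)
        ((PowerSeries.X + PowerSeries.C ((h:ℚ) - ((n+1:ℕ):ℚ)))^(m-i) *
          ∏ k ∈ (Finset.range (n+2)).erase h, (sinv ((h:ℚ) - (k:ℚ)))^m) := by
      apply Good.mul
      · have hg := (good_X_add_C (n := n) ((h:ℤ) - ((n+1:ℕ):ℤ))).pow (m-i)
        rw [Int.cast_sub, Int.cast_natCast, Int.cast_natCast] at hg
        exact hg
      · apply Good.prod
        intro k hk
        have hk1 : k ≠ h := Finset.ne_of_mem_erase hk
        have hk2 : k < n + 2 := Finset.mem_range.mp (Finset.mem_of_mem_erase hk)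
        have hcz : ((h:ℤ) - (k:ℤ)) ≠ 0 := by
          intro h0
          exact hk1 (by omega)
        have habs : ((h:ℤ) - (k:ℤ)).natAbs ≤ n + 1 := by omega
        have hg := (good_sinv (n := n) hcz habs).pow m
        rw [Int.cast_sub, Int.cast_natCast, Int.cast_natCast] at hg
        exact hg
    obtain ⟨z, hz⟩ := hgood (m-(j'+1))
    rw [← hcf] at hz
    -- arithmetic
    set c : ℤ := ∏ k ∈ (Finset.range (n+2)).erase h, ((h:ℤ) - (k:ℤ)) with hc
    have hcprod : ((1:ℚ)^(m-i) * ∏ k ∈ (Finset.range (n+2)).erase h,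
        ((((h:ℤ) - (k:ℤ)):ℚ))^m) = ((c:ℚ))^m := by
      rw [one_pow, one_mul, hc]
      push_cast
      rw [← Finset.prod_pow]
    rw [hcprod] at hz
    obtain ⟨e, he⟩ := pow_dvd_pow_of_dvd (prod_diff_dvd n h (by omega)) m
    rw [← hc] at he
    refine ⟨e * (dlcm (n+1):ℤ)^(j'+1) * z, ?_⟩
    have hD : ((dlcm (n+1):ℚ))^m = (dlcm (n+1):ℚ)^(m-(j'+1)) * (dlcm (n+1):ℚ)^(j'+1) := by
      rw [← pow_add]
      congr 1
      omega
    have heq : (((n+1).factorial:ℚ))^m = ((c:ℚ))^m * (e:ℚ) := by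
      have h2 : ((((n+1).factorial:ℤ)^m : ℤ):ℚ) = (((c^m * e):ℤ):ℚ) := by rw [he]
      rw [Int.cast_mul, Int.cast_pow, Int.cast_pow, Int.cast_natCast] at h2
      exact h2
    rw [hD, heq]
    push_cast
    calc (dlcm (n+1):ℚ)^(m-(j'+1)) * (dlcm (n+1):ℚ)^(j'+1) * ((c:ℚ)^m * (e:ℚ)) * a i h (j'+1)
        = ((e:ℚ) * (dlcm (n+1):ℚ)^(j'+1)) * ((c:ℚ)^m * (dlcm (n+1):ℚ)^(m-(j'+1)) * a i h (j'+1)) := by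
          ring
      _ = (e:ℚ) * (dlcm (n+1):ℚ)^(j'+1) * (z:ℚ) := by rw [hz]
      _ = _ := by ring
  refine ⟨part1, ?_⟩
  intro K _ _ α i j hi1 him hjm
  -- den α facts
  have hden : 0 < den α ∧ IsIntegral ℤ ((den α : K) * α) := by
    have hne : {k : ℕ | 0 < k ∧ IsIntegral ℤ ((k : K) * α)}.Nonempty := by
      have halg : IsAlgebraic ℤ α := by
        rw [IsFractionRing.isAlgebraic_iff ℤ ℚ K]
        exact Algebra.IsAlgebraic.isAlgebraic α
      obtain ⟨x, y, hy, hxy⟩ : ∃ (x : integralClosure ℤ K) (y : ℤ), y ≠ 0 ∧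
          algebraMap ℤ K y * α = x := by
        obtain ⟨y, hy, hyint⟩ := halg.exists_integral_multiple
        exact ⟨⟨y • α, hyint⟩, y, hy, by simp [zsmul_eq_mul]⟩
      have hxint : IsIntegral ℤ (x : K) := x.2
      refine ⟨y.natAbs, Int.natAbs_pos.mpr hy, ?_⟩
      have hyx : ((y:ℤ):K) * α = (x:K) := by rw [← hxy, eq_intCast]
      rcases Int.natAbs_eq y with hy1 | hy1
      · have hcst : ((y.natAbs : ℕ):K) = ((y:ℤ):K) := by
          conv_rhs => rw [hy1]
          rw [Int.cast_natCast]
        rw [hcst, hyx]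
        exact hxint
      · have hcst : ((y.natAbs : ℕ):K) = -((y:ℤ):K) := by
          conv_rhs => rw [hy1]
          rw [Int.cast_neg, Int.cast_natCast, neg_neg]
        rw [hcst, neg_mul, hyx]
        exact hxint.neg
    exact Nat.sInf_mem hne
  obtain ⟨hd1, hd2⟩ := hden
  -- evaluate padeA
  have heval : Polynomial.aeval α (padeA n a i j) =
      algebraMap ℚ K ((j.factorial : ℚ))⁻¹ *
        ∑ h ∈ Finset.range (n+2), algebraMap ℚ K (a i h (j+1)) * (1+α)^h := by
    simp [padeA, map_sum, map_mul, map_pow]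
  rw [heval]
  rw [show ((((dlcm (n + 1)) ^ m * ((n + 1).factorial) ^ m * (m - 1).factorial *
      (den α) ^ (n + 1) : ℕ) : K) * (algebraMap ℚ K ((j.factorial : ℚ))⁻¹ *
        ∑ h ∈ Finset.range (n+2), algebraMap ℚ K (a i h (j+1)) * (1+α)^h))
    = ∑ h ∈ Finset.range (n+2), (((dlcm (n + 1)) ^ m * ((n + 1).factorial) ^ m *
        (m - 1).factorial * (den α) ^ (n + 1) : ℕ) : K) *
        algebraMap ℚ K ((j.factorial : ℚ))⁻¹ * (algebraMap ℚ K (a i h (j+1)) * (1+α)^h) by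
      rw [Finset.mul_sum, Finset.mul_sum]
      exact Finset.sum_congr rfl fun h _ => by ring]
  apply IsIntegral.sum
  intro h hhmem
  have hh : h ≤ n + 1 := by
    have := Finset.mem_range.mp hhmem
    omega
  obtain ⟨z, hz⟩ := part1 i h (j+1) hi1 him hh (by omega) (by omega)
  -- b = (m-1)!/j!
  have hjd : j.factorial ∣ (m-1).factorial := Nat.factorial_dvd_factorial hjm
  obtain ⟨b, hb⟩ := hjd
  have hjfne : (j.factorial : ℚ) ≠ 0 := by
    exact_mod_cast j.factorial_ne_zero
  -- the rational identity
  have hrat : (((dlcm (n + 1)) ^ m * ((n + 1).factorial) ^ m * (m - 1).factorial *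
      (den α) ^ (n + 1) : ℕ) : ℚ) * ((j.factorial : ℚ))⁻¹ * a i h (j+1)
      = ((z * b : ℤ):ℚ) * ((den α : ℚ))^(n+1) := by
    have hbq : ((m-1).factorial : ℚ) = (j.factorial : ℚ) * (b:ℚ) := by exact_mod_cast hb
    push_cast
    rw [hbq]
    field_simp
    linear_combination (b:ℚ) * hz
  -- transfer to K
  have hKeq : (((dlcm (n + 1)) ^ m * ((n + 1).factorial) ^ m * (m - 1).factorial *
      (den α) ^ (n + 1) : ℕ) : K) * algebraMap ℚ K ((j.factorial : ℚ))⁻¹ *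
      (algebraMap ℚ K (a i h (j+1)) * (1+α)^h)
      = ((z * b : ℤ):K) * ((den α : K)^(n+1-h) * ((den α : K) * (1+α))^h) := by
    have e1 : (((dlcm (n + 1)) ^ m * ((n + 1).factorial) ^ m * (m - 1).factorial *
        (den α) ^ (n + 1) : ℕ) : K) = algebraMap ℚ K
        (((dlcm (n + 1)) ^ m * ((n + 1).factorial) ^ m * (m - 1).factorial *
        (den α) ^ (n + 1) : ℕ) : ℚ) := by
      rw [map_natCast]
    rw [e1, ← map_mul, ← mul_assoc, ← map_mul, hrat,
      map_mul, map_intCast, map_pow, map_natCast]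
    have hsplitpow : (den α : K)^(n+1) = (den α : K)^(n+1-h) * (den α : K)^h := by
      rw [← pow_add]
      congr 1
      omega
    rw [hsplitpow, mul_pow]
    ring
  rw [hKeq]
  -- integrality
  apply IsIntegral.mul
  · have : ((z * b : ℤ):K) = algebraMap ℤ K (z * b) := by rw [eq_intCast]
    rw [this]
    exact isIntegral_algebraMap
  · apply IsIntegral.mul
    · apply IsIntegral.pow
      have : ((den α : ℕ):K) = algebraMap ℤ K (den α : ℤ) := by
        rw [eq_intCast]
        push_cast
        ring
      rw [this]
      exact isIntegral_algebraMap
    · apply IsIntegral.pow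
      have : (den α : K) * (1+α) = (den α : K) + (den α : K) * α := by ring
      rw [this]
      apply IsIntegral.add
      · have : ((den α : ℕ):K) = algebraMap ℤ K (den α : ℤ) := by
          rw [eq_intCast]; push_cast; ring
        rw [this]
        exact isIntegral_algebraMap
      · exact hd2
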